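/- arXiv:1810.11783 — 2 statements merged into one kernel-verified Lean document; each statement's English description precedes it below -/
import Mathlib

section
/- Let f : ℝ^n → ℝ^m, s ∈ ℝ^n, R > 0, and suppose for each t ∈ [0, R] there is a constant L(t) ≥ 0 such that f restricted to the closed ball B[s; t] is L(t)-Lipschitz, with t ↦ L(t) nondecreasing and integrable. Then for all x with ‖x − s‖ ≤ R: ‖f(x) − f(s)‖ ≤ ∫_0^R L(t) dt ≤ L(R) · R. -/
/-- Theorem 2: integral Lipschitz bound. -/
theorem stmt_7 (n m : ℕ)
    (f : (Fin n → ℝ) → (Fin m → ℝ)) (s : Fin n → ℝ) (R : ℝ) (hR : 0 < R)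
    (L : ℝ → ℝ)
    (hLip : ∀ t ∈ Set.Icc 0 R, 0 ≤ L t ∧
      LipschitzOnWith (Real.toNNReal (L t)) f (Metric.closedBall s t))
    (hmono : MonotoneOn L (Set.Icc 0 R))
    (hint : IntervalIntegrable L MeasureTheory.volume 0 R) :
    ∀ x, ‖x - s‖ ≤ R →
      ‖f x - f s‖ ≤ ∫ t in (0:ℝ)..R, L t ∧ (∫ t in (0:ℝ)..R, L t) ≤ L R * R := by
  have hL0 : ∀ t ∈ Set.Icc (0:ℝ) R, 0 ≤ L t := fun t ht => (hLip t ht).1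
  have hint2 : (∫ t in (0:ℝ)..R, L t) ≤ L R * R := by
    calc (∫ t in (0:ℝ)..R, L t) ≤ ∫ _t in (0:ℝ)..R, L R := by
          apply intervalIntegral.integral_mono_on hR.le hint intervalIntegrable_const
          intro t ht
          exact hmono ht (Set.right_mem_Icc.mpr hR.le) ht.2
      _ = L R * R := by simp [mul_comm]
  intro x hx
  refine ⟨?_, hint2⟩
  by_cases hxs : x = s
  · subst hxs
    simp only [sub_self, norm_zero]
    exact intervalIntegral.integral_nonneg hR.le hL0
  have hrpos : 0 < ‖x - s‖ := norm_pos_iff.mpr (sub_ne_zero.mpr hxs)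
  set r : ℝ := ‖x - s‖ with hrdef
  have hrR : r ≤ R := hx
  refine le_of_forall_pos_le_add ?_
  intro ε hε
  have hrmem : r ∈ Set.Icc (0:ℝ) R := ⟨hrpos.le, hrR⟩
  have h0mem : (0:ℝ) ∈ Set.Icc (0:ℝ) R := ⟨le_refl 0, hR.le⟩
  have hLr0 : 0 ≤ L r - L 0 := sub_nonneg.mpr (hmono h0mem hrmem hrpos.le)
  obtain ⟨N, hN⟩ := exists_nat_gt ((L r - L 0) * r / ε)
  have hNpos : 0 < (N:ℝ) := lt_of_le_of_lt (by positivity) hN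
  set Δ : ℝ := r / N with hΔ
  have hΔpos : 0 < Δ := div_pos hrpos hNpos
  set T : ℕ → ℝ := fun i => i * Δ with hT
  have hTN : T N = r := by
    simp only [hT, hΔ]
    field_simp
  have hT0 : T 0 = 0 := by simp [hT]
  have hTmono : ∀ i j : ℕ, i ≤ j → T i ≤ T j := fun i j h =>
    mul_le_mul_of_nonneg_right (Nat.cast_le.mpr h) hΔpos.le
  have hTnonneg : ∀ i : ℕ, 0 ≤ T i := fun i => by
    simp only [hT]; positivity
  have hTmem : ∀ i, i ≤ N → T i ∈ Set.Icc (0:ℝ) R := fun i hi =>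
    ⟨hTnonneg i, le_trans (hTN ▸ hTmono i N hi) hrR⟩
  set c : ℕ → (Fin n → ℝ) := fun i => s + ((i:ℝ)/N) • (x - s) with hc
  have hc0 : c 0 = s := by simp [hc]
  have hcN : c N = x := by
    simp [hc, div_self hNpos.ne']
  have hcdist : ∀ i : ℕ, dist (c i) s = T i := by
    intro i
    have h1 : c i - s = ((i:ℝ)/N) • (x - s) := by simp [hc]
    rw [dist_eq_norm, h1, norm_smul, Real.norm_eq_abs,
      abs_of_nonneg (by positivity : (0:ℝ) ≤ (i:ℝ)/N)]
    simp only [hT, hΔ, ← hrdef]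
    ring
  have hcstep : ∀ i : ℕ, dist (c (i+1)) (c i) = Δ := by
    intro i
    have h1 : c (i+1) - c i = ((1:ℝ)/N) • (x - s) := by
      simp only [hc]
      rw [add_sub_add_left_eq_sub, ← sub_smul]
      congr 1
      push_cast
      field_simp
      ring
    rw [dist_eq_norm, h1, norm_smul, Real.norm_eq_abs,
      abs_of_nonneg (by positivity : (0:ℝ) ≤ (1:ℝ)/N)]
    simp only [hΔ, ← hrdef]
    ring
  have hstep : ∀ i, i < N → ‖f (c (i+1)) - f (c i)‖ ≤ L (T (i+1)) * Δ := by
    intro i hi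
    have hTi : T (i+1) ∈ Set.Icc (0:ℝ) R := hTmem (i+1) hi
    have hmem1 : c (i+1) ∈ Metric.closedBall s (T (i+1)) := by
      rw [Metric.mem_closedBall, hcdist]
    have hmem2 : c i ∈ Metric.closedBall s (T (i+1)) := by
      rw [Metric.mem_closedBall, hcdist]
      exact hTmono i (i+1) (Nat.le_succ i)
    have hd := (hLip (T (i+1)) hTi).2.dist_le_mul _ hmem1 _ hmem2
    rw [Real.coe_toNNReal _ (hLip (T (i+1)) hTi).1, hcstep i] at hd
    rw [← dist_eq_norm]
    exact hd
  have htel : f x - f s = ∑ i ∈ Finset.range N, (f (c (i+1)) - f (c i)) := by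
    rw [Finset.sum_range_sub (fun i => f (c i)), hc0, hcN]
  have hsum1 : ‖f x - f s‖ ≤ ∑ i ∈ Finset.range N, L (T (i+1)) * Δ := by
    rw [htel]
    exact le_trans (norm_sum_le _ _)
      (Finset.sum_le_sum fun i hi => hstep i (Finset.mem_range.mp hi))
  -- shift the sum
  have hshift : ∑ i ∈ Finset.range N, L (T (i+1)) * Δ
      = (∑ i ∈ Finset.range N, L (T i) * Δ) + (L r - L 0) * Δ := by
    have h1 : ∑ i ∈ Finset.range (N+1), L (T i) * Δ
        = (∑ i ∈ Finset.range N, L (T (i+1)) * Δ) + L (T 0) * Δ :=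
      Finset.sum_range_succ' (fun i => L (T i) * Δ) N
    have h2 : ∑ i ∈ Finset.range (N+1), L (T i) * Δ
        = (∑ i ∈ Finset.range N, L (T i) * Δ) + L (T N) * Δ :=
      Finset.sum_range_succ (fun i => L (T i) * Δ) N
    rw [h2, hTN, hT0] at h1
    linarith [h1]
  -- lower Riemann sum is below the integral
  have hintsub : ∀ i, i < N → IntervalIntegrable L MeasureTheory.volume (T i) (T (i+1)) := by
    intro i hi
    apply hint.mono_set
    rw [Set.uIcc_of_le (hTmono i (i+1) (Nat.le_succ i)), Set.uIcc_of_le hR.le]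
    exact Set.Icc_subset_Icc (hTmem i hi.le).1 (hTmem (i+1) hi).2
  have hpiece : ∀ i, i < N → L (T i) * Δ ≤ ∫ u in (T i)..(T (i+1)), L u := by
    intro i hi
    have hle : T i ≤ T (i+1) := hTmono i (i+1) (Nat.le_succ i)
    have hmono' : ∫ _u in (T i)..(T (i+1)), L (T i) ≤ ∫ u in (T i)..(T (i+1)), L u := by
      apply intervalIntegral.integral_mono_on hle intervalIntegrable_const (hintsub i hi)
      intro u hu
      exact hmono (hTmem i hi.le)
        ⟨le_trans (hTnonneg i) hu.1, le_trans hu.2 (hTmem (i+1) hi).2⟩ hu.1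
    have hTd : T (i+1) - T i = Δ := by
      simp only [hT]
      push_cast
      ring
    rw [intervalIntegral.integral_const, smul_eq_mul, hTd, mul_comm] at hmono'
    exact hmono'
  have hadj := intervalIntegral.sum_integral_adjacent_intervals
    (f := L) (μ := MeasureTheory.volume) (a := T) (n := N) hintsub
  rw [hT0, hTN] at hadj
  have hlow : (∑ i ∈ Finset.range N, L (T i) * Δ) ≤ ∫ u in (0:ℝ)..r, L u := by
    calc (∑ i ∈ Finset.range N, L (T i) * Δ)
        ≤ ∑ i ∈ Finset.range N, ∫ u in (T i)..(T (i+1)), L u :=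
          Finset.sum_le_sum fun i hi => hpiece i (Finset.mem_range.mp hi)
      _ = ∫ u in (0:ℝ)..r, L u := hadj
  have hext : (∫ u in (0:ℝ)..r, L u) ≤ ∫ u in (0:ℝ)..R, L u := by
    apply intervalIntegral.integral_mono_interval (le_refl (0:ℝ)) hrpos.le hrR
    · exact (MeasureTheory.ae_restrict_iff' measurableSet_Ioc).mpr
        (Filter.Eventually.of_forall fun u hu => hL0 u ⟨hu.1.le, hu.2⟩)
    · exact hint
  have hεbound : (L r - L 0) * Δ ≤ ε := by
    have h1 : (L r - L 0) * r < N * ε := by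
      rw [div_lt_iff₀ hε] at hN
      exact hN
    have h2 : (L r - L 0) * Δ = (L r - L 0) * r / N := by
      rw [hΔ]; ring
    rw [h2, div_le_iff₀ hNpos]
    nlinarith [h1]
  calc ‖f x - f s‖ ≤ ∑ i ∈ Finset.range N, L (T (i+1)) * Δ := hsum1
    _ = (∑ i ∈ Finset.range N, L (T i) * Δ) + (L r - L 0) * Δ := hshift
    _ ≤ (∫ u in (0:ℝ)..r, L u) + ε := add_le_add hlow hεbound
    _ ≤ (∫ u in (0:ℝ)..R, L u) + ε := add_le_add_left hext ε
end

section
/- Let f : ℝ^n → ℝ^K be locally Lipschitz, x ∈ ℝ^n with predicted class y = argmax_j f_j(x), R > 0, and for each j ≠ y let L_j be a Lipschitz constant of g_j = f_y − f_j on the closed ball B[x; R] with L_j > 0. Then for every Δ with ‖Δ‖ < min(R, min_{j≠y} (f_y(x) − f_j(x))/L_j), we have f_y(x + Δ) > f_j(x + Δ) for all j ≠ y. -/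
/-- Lemma 1: robustness lower bound via local Lipschitz constants. -/
theorem stmt_16 (n K : ℕ) (f : (Fin n → ℝ) → (Fin K → ℝ))
    (hf : LocallyLipschitz f)
    (x : Fin n → ℝ) (y : Fin K) (R : ℝ) (hR : 0 < R)
    (hy : ∀ j, j ≠ y → f x j < f x y)
    (L : Fin K → ℝ) (hLpos : ∀ j, j ≠ y → 0 < L j)
    (hLip : ∀ j, j ≠ y → LipschitzOnWith (Real.toNNReal (L j))
      (fun z => f z y - f z j) (Metric.closedBall x R)) :
    ∀ Δ : Fin n → ℝ, ‖Δ‖ < R →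
      (∀ j, j ≠ y → ‖Δ‖ < (f x y - f x j) / L j) →
      ∀ j, j ≠ y → f (x + Δ) j < f (x + Δ) y := by
  intro Δ hΔR hΔ j hj
  have hLj := hLpos j hj
  have h1 : x + Δ ∈ Metric.closedBall x R := by
    simp [Metric.mem_closedBall, dist_eq_norm]
    linarith
  have h2 : x ∈ Metric.closedBall x R := Metric.mem_closedBall_self hR.le
  have hd := (hLip j hj).dist_le_mul _ h1 _ h2
  rw [Real.coe_toNNReal _ hLj.le] at hd
  have hdx : dist (x + Δ) x = ‖Δ‖ := by simp [dist_eq_norm]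
  rw [hdx] at hd
  have hkey : ‖Δ‖ * L j < f x y - f x j := by
    have := hΔ j hj
    calc ‖Δ‖ * L j < ((f x y - f x j) / L j) * L j := by
          exact mul_lt_mul_of_pos_right this hLj
      _ = f x y - f x j := div_mul_cancel₀ _ hLj.ne'
  rw [Real.dist_eq] at hd
  have := abs_le.mp hd
  nlinarith [this.1, this.2]
end
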